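/- Let ρ be a d×d density matrix, let n ≥ 1, and let α_1, …, α_n be real numbers, not all zero, with γ := max_j |α_j|. With the variant QSF circuit built from the uniform control state ψ := Σ_{j=1}^n (1/√n) |j⟩ and rotation angles θ_j := arcsin(α_j/γ) — i.e. W := Σ_{j=1}^n |j⟩⟨j| ⊗ [ (|0⟩⟨0| ⊗ I + |1⟩⟨1| ⊗ (P_j ⊗ I)) (R_y(θ_j) ⊗ I) ] on ℂ^n ⊗ ℂ² ⊗ (ℂ^d)^{⊗n} — the Pauli-X expectation on the single-qubit register satisfies tr[ (I_n ⊗ X ⊗ I) · W (|ψ⟩⟨ψ| ⊗ |0⟩⟨0| ⊗ ρ^{⊗n}) W† ] = (1/(nγ)) Σ_{j=1}^n α_j tr(ρ^j), so that n·γ times this expectation equals the polynomial function f_n(ρ) = Σ_{j=1}^n α_j tr(ρ^j). -/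

import Mathlib

open Matrix Kronecker
open scoped ComplexOrder

/-- `|0⟩⟨0|` on one qubit. -/
noncomputable def ketbra0 : Matrix (Fin 2) (Fin 2) ℂ := !![1, 0; 0, 0]

/-- `|1⟩⟨1|` on one qubit. -/
noncomputable def ketbra1 : Matrix (Fin 2) (Fin 2) ℂ := !![0, 0; 0, 1]

/-- The Pauli-X matrix. -/
noncomputable def pauliX : Matrix (Fin 2) (Fin 2) ℂ := !![0, 1; 1, 0]

/-- The single-qubit rotation `R_y(θ)` with first column `(cos(θ/2), sin(θ/2))`
and second column `(−sin(θ/2), cos(θ/2))`. -/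
noncomputable def Ry (θ : ℝ) : Matrix (Fin 2) (Fin 2) ℂ :=
  !![(Real.cos (θ / 2) : ℂ), (-(Real.sin (θ / 2)) : ℝ);
     (Real.sin (θ / 2) : ℂ), (Real.cos (θ / 2) : ℂ)]

/-- The n-fold tensor (Kronecker) power `ρ^{⊗n}`, indexed by tuples `Fin n → Fin d`. -/
noncomputable def tensorPow (d n : ℕ) (ρ : Matrix (Fin d) (Fin d) ℂ) :
    Matrix (Fin n → Fin d) (Fin n → Fin d) ℂ :=
  Matrix.of fun x y => ∏ i, ρ (x i) (y i)

/-- The index map underlying the cyclic permutation of the first `j` of `n` tensor factors. -/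
def cycIdx (n j : ℕ) (i : Fin n) : Fin n :=
  if h : (i : ℕ) + 1 < j ∧ (i : ℕ) + 1 < n then ⟨(i : ℕ) + 1, h.2⟩
  else if (i : ℕ) + 1 = j then ⟨0, i.pos⟩
  else i

/-- `P_j ⊗ I`: the cyclic permutation operator on the first `j` tensor factors of
`(ℂ^d)^{⊗n}`, identity on the remaining factors. -/
noncomputable def cycPerm (d n j : ℕ) : Matrix (Fin n → Fin d) (Fin n → Fin d) ℂ :=
  Matrix.of fun y x => if y = (fun i => x (cycIdx n j i)) then 1 else 0

/-- The QSF circuit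
`W = Σ_{j=1}^n |j⟩⟨j| ⊗ [(|0⟩⟨0| ⊗ I + |1⟩⟨1| ⊗ (P_j ⊗ I)) · (R_y(θ_j) ⊗ I)]`
on `ℂ^n ⊗ ℂ² ⊗ (ℂ^d)^{⊗n}` (the index `j : Fin n` encodes the degree `j + 1`). -/
noncomputable def qsfW (d n : ℕ) (θ : Fin n → ℝ) :
    Matrix (Fin n × Fin 2 × (Fin n → Fin d)) (Fin n × Fin 2 × (Fin n → Fin d)) ℂ :=
  ∑ j : Fin n, Matrix.single j j (1 : ℂ) ⊗ₖ
    ((ketbra0 ⊗ₖ (1 : Matrix (Fin n → Fin d) (Fin n → Fin d) ℂ)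
        + ketbra1 ⊗ₖ cycPerm d n ((j : ℕ) + 1)) *
      (Ry (θ j) ⊗ₖ (1 : Matrix (Fin n → Fin d) (Fin n → Fin d) ℂ)))

section AuxLemmas

variable {d : ℕ}

lemma chainG (m : ℕ) (ρ A : Matrix (Fin d) (Fin d) ℂ) :
    ∑ y : Fin (m+1) → Fin d,
      (∏ i : Fin m, ρ (y i.castSucc) (y i.succ)) * A (y (Fin.last m)) (y 0)
      = (ρ ^ m * A).trace := by
  induction m generalizing A with
  | zero =>
    rw [pow_zero, one_mul, Matrix.trace]
    rw [← (Equiv.funUnique (Fin 1) (Fin d)).symm.sum_comp]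
    simp [Matrix.diag]
  | succ m ih =>
    rw [← (Fin.snocEquiv (fun _ => Fin d)).sum_comp, Fintype.sum_prod_type_right]
    have key : ∀ y : Fin (m+1) → Fin d, ∀ c : Fin d,
        (∏ i : Fin (m+1), ρ ((Fin.snoc y c : Fin (m+2) → Fin d) i.castSucc)
            ((Fin.snoc y c : Fin (m+2) → Fin d) i.succ)) *
          A ((Fin.snoc y c : Fin (m+2) → Fin d) (Fin.last (m+1)))
            ((Fin.snoc y c : Fin (m+2) → Fin d) 0)
        = (∏ i : Fin m, ρ (y i.castSucc) (y i.succ)) *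
            (ρ (y (Fin.last m)) c * A c (y 0)) := by
      intro y c
      rw [Fin.prod_univ_castSucc]
      have h1 : ∀ i : Fin m,
          ρ ((Fin.snoc y c : Fin (m+2) → Fin d) i.castSucc.castSucc)
              ((Fin.snoc y c : Fin (m+2) → Fin d) i.castSucc.succ)
            = ρ (y i.castSucc) (y i.succ) := by
        intro i
        rw [Fin.snoc_castSucc, Fin.succ_castSucc, Fin.snoc_castSucc]
      rw [Finset.prod_congr rfl (fun i _ => h1 i)]
      have h0 : (0 : Fin (m+2)) = Fin.castSucc 0 := rfl
      rw [Fin.snoc_castSucc, Fin.succ_last, Fin.snoc_last, h0, Fin.snoc_castSucc]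
      ring
    have : ∀ y : Fin (m+1) → Fin d,
        ∑ c : Fin d, (fun y' => (∏ i : Fin (m+1), ρ (y' i.castSucc) (y' i.succ)) *
          A (y' (Fin.last (m+1))) (y' 0)) (Fin.snocEquiv (fun _ => Fin d) (c, y))
        = (∏ i : Fin m, ρ (y i.castSucc) (y i.succ)) * ((ρ * A) (y (Fin.last m)) (y 0)) := by
      intro y
      simp only [Fin.snocEquiv_apply, key]
      rw [← Finset.mul_sum, Matrix.mul_apply]
    rw [Finset.sum_congr rfl (fun y _ => this y), ih (ρ * A), pow_succ, mul_assoc]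

lemma cycIdx_castSucc (n j : ℕ) (hj : j ≤ n) (i : Fin n) :
    cycIdx (n+1) j i.castSucc = (cycIdx n j i).castSucc := by
  rcases i with ⟨v, hv⟩
  unfold cycIdx
  simp only [Fin.castSucc_mk, Fin.coe_castSucc]
  split_ifs with h1 h2 h3 h4 h5 <;>
    first
      | rfl
      | (exfalso; omega)
      | (apply Fin.ext; simp)

lemma cycIdx_last (n j : ℕ) (hj : j ≤ n) :
    cycIdx (n+1) j (Fin.last n) = Fin.last n := by
  unfold cycIdx
  simp only [Fin.val_last]
  split_ifs with h1 h2 <;> first | rfl | (exfalso; omega)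

lemma cyc_full (m : ℕ) (ρ : Matrix (Fin d) (Fin d) ℂ) :
    ∑ y : Fin (m+1) → Fin d, ∏ i, ρ (y i) (y (cycIdx (m+1) (m+1) i))
      = (ρ ^ (m+1)).trace := by
  have key : ∀ y : Fin (m+1) → Fin d,
      (∏ i, ρ (y i) (y (cycIdx (m+1) (m+1) i)))
      = (∏ i : Fin m, ρ (y i.castSucc) (y i.succ)) * ρ (y (Fin.last m)) (y 0) := by
    intro y
    rw [Fin.prod_univ_castSucc]
    congr 1
    · refine Finset.prod_congr rfl fun i _ => ?_
      congr 1
      unfold cycIdx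
      rcases i with ⟨v, hv⟩
      simp only [Fin.coe_castSucc, Fin.castSucc_mk]
      rw [dif_pos ⟨by omega, by omega⟩]
      rfl
    · congr 1
      unfold cycIdx
      simp only [Fin.val_last]
      rw [dif_neg (by omega)]
      simp
  rw [Finset.sum_congr rfl (fun y _ => key y), chainG, pow_succ]

lemma sum_cyc (j : ℕ) (hj : 1 ≤ j) (ρ : Matrix (Fin d) (Fin d) ℂ) (htr : ρ.trace = 1) :
    ∀ n, j ≤ n → ∑ y : Fin n → Fin d, ∏ i, ρ (y i) (y (cycIdx n j i)) = (ρ ^ j).trace := by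
  refine Nat.le_induction ?_ ?_
  · obtain ⟨m, rfl⟩ : ∃ m, j = m + 1 := ⟨j - 1, by omega⟩
    exact cyc_full m ρ
  · intro n hjn ih
    rw [← (Fin.snocEquiv (fun _ => Fin d)).sum_comp, Fintype.sum_prod_type_right]
    have key : ∀ y : Fin n → Fin d, ∀ c : Fin d,
        (∏ i : Fin (n+1), ρ ((Fin.snoc y c : Fin (n+1) → Fin d) i)
            ((Fin.snoc y c : Fin (n+1) → Fin d) (cycIdx (n+1) j i)))
        = (∏ i : Fin n, ρ (y i) (y (cycIdx n j i))) * ρ c c := by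
      intro y c
      rw [Fin.prod_univ_castSucc]
      congr 1
      · refine Finset.prod_congr rfl fun i _ => ?_
        rw [cycIdx_castSucc n j hjn, Fin.snoc_castSucc, Fin.snoc_castSucc]
      · rw [cycIdx_last n j hjn, Fin.snoc_last]
    have step : ∀ y : Fin n → Fin d,
        (∑ c : Fin d, (fun y' : Fin (n+1) → Fin d =>
            ∏ i, ρ (y' i) (y' (cycIdx (n+1) j i))) (Fin.snocEquiv (fun _ => Fin d) (c, y)))
        = ∏ i : Fin n, ρ (y i) (y (cycIdx n j i)) := by
      intro y
      simp only [Fin.snocEquiv_apply]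
      have : ∀ c : Fin d,
          (∏ i : Fin (n+1), ρ ((Fin.snoc y c : Fin (n+1) → Fin d) i)
            ((Fin.snoc y c : Fin (n+1) → Fin d) (cycIdx (n+1) j i)))
          = (∏ i : Fin n, ρ (y i) (y (cycIdx n j i))) * ρ c c := key y
      rw [Finset.sum_congr rfl (fun c _ => this c), ← Finset.mul_sum]
      have : ∑ c : Fin d, ρ c c = ρ.trace := rfl
      rw [this, htr, mul_one]
    rw [Finset.sum_congr rfl (fun y _ => step y), ih]

lemma trace_tensorPow_cycPerm (n j : ℕ) (hj : 1 ≤ j) (hjn : j ≤ n)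
    (ρ : Matrix (Fin d) (Fin d) ℂ) (htr : ρ.trace = 1) :
    (tensorPow d n ρ * cycPerm d n j).trace = (ρ ^ j).trace := by
  rw [← sum_cyc j hj ρ htr n hjn]
  rw [Matrix.trace]
  refine Finset.sum_congr rfl fun y _ => ?_
  rw [Matrix.diag_apply, Matrix.mul_apply]
  have : ∀ x, tensorPow d n ρ y x * cycPerm d n j x y
      = if x = (fun i => y (cycIdx n j i)) then tensorPow d n ρ y x else 0 := by
    intro x
    simp only [cycPerm, Matrix.of_apply]
    split_ifs <;> simp
  rw [Finset.sum_congr rfl (fun x _ => this x), Finset.sum_ite_eq' Finset.univ]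
  simp [tensorPow]

lemma tensorPow_herm (n : ℕ) (ρ : Matrix (Fin d) (Fin d) ℂ) (h : ρ.IsHermitian) :
    (tensorPow d n ρ)ᴴ = tensorPow d n ρ := by
  ext x y
  simp only [Matrix.conjTranspose_apply, tensorPow, Matrix.of_apply, star_prod]
  refine Finset.prod_congr rfl fun i _ => ?_
  simpa [Matrix.conjTranspose_apply] using congrFun (congrFun h (x i)) (y i)

lemma kron_conjT {l m p q : Type*} [Fintype l] [Fintype m] [Fintype p] [Fintype q]
    (A : Matrix l m ℂ) (B : Matrix p q ℂ) : (A ⊗ₖ B)ᴴ = Aᴴ ⊗ₖ Bᴴ := by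
  ext ⟨a,b⟩ ⟨c,d⟩
  simp [Matrix.conjTranspose_apply, mul_comm]

lemma stdBasis_conjT {m : Type*} [Fintype m] [DecidableEq m] (j : m) :
    (Matrix.single j j (1 : ℂ))ᴴ = Matrix.single j j 1 := by
  ext a b
  by_cases h1 : j = a <;> by_cases h2 : j = b <;>
    simp [Matrix.single, Matrix.conjTranspose_apply, h1, h2]

lemma ctrl_trace {m : Type*} [Fintype m] [DecidableEq m] (j k : m) (S : Matrix m m ℂ) :
    (Matrix.single j j (1:ℂ) * S * Matrix.single k k (1:ℂ)).trace
      = if j = k then S j j else 0 := by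
  simp only [Matrix.trace, Matrix.diag, Matrix.mul_apply, Matrix.single, Matrix.of_apply,
    ite_mul, mul_ite, one_mul, mul_one, zero_mul, mul_zero, ite_and]
  simp only [Finset.sum_ite_eq, Finset.sum_ite_eq', Finset.mem_univ, if_true]
  split_ifs with h
  · subst h; simp
  · simp

lemma ketbra0_conjT : ketbra0ᴴ = ketbra0 := by
  ext i j; fin_cases i <;> fin_cases j <;> simp [ketbra0]

lemma ketbra1_conjT : ketbra1ᴴ = ketbra1 := by
  ext i j; fin_cases i <;> fin_cases j <;> simp [ketbra1]

lemma p00 (θ : ℝ) : (pauliX * ketbra0 * Ry θ * ketbra0 * (Ry θ)ᴴ * ketbra0).trace = 0 := by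
  simp [pauliX, ketbra0, Ry, Matrix.trace_fin_two, Matrix.mul_apply, Fin.sum_univ_two,
    Matrix.conjTranspose_apply, Matrix.vecMul, dotProduct, ← Complex.ofReal_cos,
    ← Complex.ofReal_sin, ← Complex.ofReal_neg, Complex.conj_ofReal]

lemma p01 (θ : ℝ) : (pauliX * ketbra0 * Ry θ * ketbra0 * (Ry θ)ᴴ * ketbra1).trace
    = ((Real.cos (θ/2) * Real.sin (θ/2) : ℝ) : ℂ) := by
  simp [pauliX, ketbra0, ketbra1, Ry, Matrix.trace_fin_two, Matrix.mul_apply, Fin.sum_univ_two,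
    Matrix.conjTranspose_apply, Matrix.vecMul, dotProduct, ← Complex.ofReal_cos,
    ← Complex.ofReal_sin, ← Complex.ofReal_neg, Complex.conj_ofReal]

lemma p10 (θ : ℝ) : (pauliX * ketbra1 * Ry θ * ketbra0 * (Ry θ)ᴴ * ketbra0).trace
    = ((Real.cos (θ/2) * Real.sin (θ/2) : ℝ) : ℂ) := by
  simp [pauliX, ketbra0, ketbra1, Ry, Matrix.trace_fin_two, Matrix.mul_apply, Fin.sum_univ_two,
    Matrix.conjTranspose_apply, Matrix.vecMul, dotProduct, ← Complex.ofReal_cos,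
    ← Complex.ofReal_sin, ← Complex.ofReal_neg, Complex.conj_ofReal]
  ring

lemma p11 (θ : ℝ) : (pauliX * ketbra1 * Ry θ * ketbra0 * (Ry θ)ᴴ * ketbra1).trace = 0 := by
  simp [pauliX, ketbra1, ketbra0, Ry, Matrix.trace_fin_two, Matrix.mul_apply, Fin.sum_univ_two,
    Matrix.conjTranspose_apply, Matrix.vecMul, dotProduct, ← Complex.ofReal_cos,
    ← Complex.ofReal_sin, ← Complex.ofReal_neg, Complex.conj_ofReal]

lemma quantum_trace {F : Type*} [Fintype F] [DecidableEq F] (θ : ℝ) (τ P : Matrix F F ℂ) :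
    ((pauliX ⊗ₖ (1 : Matrix F F ℂ)) *
      ((((ketbra0 ⊗ₖ (1 : Matrix F F ℂ) + ketbra1 ⊗ₖ P) * (Ry θ ⊗ₖ 1)) * (ketbra0 ⊗ₖ τ)) *
       (((ketbra0 ⊗ₖ (1 : Matrix F F ℂ) + ketbra1 ⊗ₖ P) * (Ry θ ⊗ₖ 1))ᴴ))).trace
    = ((Real.cos (θ/2) * Real.sin (θ/2) : ℝ) : ℂ) * ((τ * Pᴴ).trace + (P * τ).trace) := by
  simp only [Matrix.conjTranspose_mul, Matrix.conjTranspose_add, kron_conjT,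
    ketbra0_conjT, ketbra1_conjT, Matrix.conjTranspose_one,
    Matrix.add_mul, Matrix.mul_add, mul_assoc]
  simp only [← Matrix.mul_kronecker_mul]
  simp only [← mul_assoc, Matrix.one_mul, Matrix.mul_one]
  simp only [Matrix.trace_add, Matrix.trace_kronecker, p00, p01, p10, p11, zero_mul, add_zero,
    zero_add]
  ring

end AuxLemmas

/-- Proposition S1 of the paper (variant QSF, exact-expectation content): for a density
matrix `ρ` and real coefficients `α_1, …, α_n`, not all zero, with `γ = max_j |α_j|`,
the variant QSF circuit with uniform control state `ψ = Σ_j (1/√n) |j⟩` and angles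
`θ_j = arcsin(α_j/γ)` satisfies
`tr[(I ⊗ X ⊗ I) · W (|ψ⟩⟨ψ| ⊗ |0⟩⟨0| ⊗ ρ^{⊗n}) W†] = (1/(nγ)) Σ_j α_j tr(ρ^j)`,
so `n·γ` times this expectation equals `f_n(ρ) = Σ_j α_j tr(ρ^j)`. -/
theorem stmt14 (d n : ℕ) (hd : 1 ≤ d) (hn : 1 ≤ n)
    (ρ : Matrix (Fin d) (Fin d) ℂ) (hρ : ρ.PosSemidef) (hρtr : ρ.trace = 1)
    (α : Fin n → ℝ) (hα : ∃ j, α j ≠ 0)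
    (γ : ℝ) (hγub : ∀ j, |α j| ≤ γ) (hγmem : ∃ j, |α j| = γ) :
    (((1 : Matrix (Fin n) (Fin n) ℂ) ⊗ₖ
          (pauliX ⊗ₖ (1 : Matrix (Fin n → Fin d) (Fin n → Fin d) ℂ))) *
        (qsfW d n (fun j => Real.arcsin (α j / γ)) *
          (Matrix.vecMulVec (fun _ => ((1 / Real.sqrt n : ℝ) : ℂ))
              (star fun _ : Fin n => ((1 / Real.sqrt n : ℝ) : ℂ)) ⊗ₖ
            (ketbra0 ⊗ₖ tensorPow d n ρ)) *
          (qsfW d n (fun j => Real.arcsin (α j / γ)))ᴴ)).trace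
      = (1 / ((n : ℂ) * ((γ : ℝ) : ℂ))) *
          ∑ j : Fin n, ((α j : ℝ) : ℂ) * (ρ ^ ((j : ℕ) + 1)).trace := by
  obtain ⟨j0, hj0⟩ := hα
  have hγpos : 0 < γ := lt_of_lt_of_le (abs_pos.mpr hj0) (hγub j0)
  -- traces of cyclic permutations against the tensor power
  have hzreal : ∀ j : Fin n, star ((ρ ^ ((j:ℕ)+1)).trace) = (ρ ^ ((j:ℕ)+1)).trace := by
    intro j
    rw [← Matrix.trace_conjTranspose, Matrix.conjTranspose_pow, hρ.1]
  have hPτ : ∀ j : Fin n,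
      (cycPerm d n ((j:ℕ)+1) * tensorPow d n ρ).trace = (ρ ^ ((j:ℕ)+1)).trace := by
    intro j
    rw [Matrix.trace_mul_comm]
    exact trace_tensorPow_cycPerm n ((j:ℕ)+1) (by omega) (by have := j.isLt; omega) ρ hρtr
  have hτP : ∀ j : Fin n,
      (tensorPow d n ρ * (cycPerm d n ((j:ℕ)+1))ᴴ).trace = (ρ ^ ((j:ℕ)+1)).trace := by
    intro j
    have h1 : tensorPow d n ρ * (cycPerm d n ((j:ℕ)+1))ᴴ
        = (cycPerm d n ((j:ℕ)+1) * tensorPow d n ρ)ᴴ := by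
      rw [Matrix.conjTranspose_mul, tensorPow_herm n ρ hρ.1]
    rw [h1, Matrix.trace_conjTranspose, hPτ j, hzreal j]
  -- the per-branch quantum expectation
  have key : ∀ j : Fin n,
      ((pauliX ⊗ₖ (1 : Matrix (Fin n → Fin d) (Fin n → Fin d) ℂ)) *
        ((((ketbra0 ⊗ₖ (1 : Matrix (Fin n → Fin d) (Fin n → Fin d) ℂ)
              + ketbra1 ⊗ₖ cycPerm d n ((j:ℕ)+1)) * (Ry (Real.arcsin (α j / γ)) ⊗ₖ 1))
            * (ketbra0 ⊗ₖ tensorPow d n ρ)) *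
         (((ketbra0 ⊗ₖ (1 : Matrix (Fin n → Fin d) (Fin n → Fin d) ℂ)
              + ketbra1 ⊗ₖ cycPerm d n ((j:ℕ)+1)) * (Ry (Real.arcsin (α j / γ)) ⊗ₖ 1))ᴴ))).trace
      = (((α j : ℝ) : ℂ) / ((γ : ℝ) : ℂ)) * (ρ ^ ((j:ℕ)+1)).trace := by
    intro j
    rw [quantum_trace, hτP j, hPτ j]
    have habs : |α j / γ| ≤ 1 := by
      rw [abs_div, abs_of_pos hγpos]
      exact (div_le_one hγpos).mpr (hγub j)
    have hsin : 2 * Real.sin (Real.arcsin (α j / γ) / 2) *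
        Real.cos (Real.arcsin (α j / γ) / 2) = α j / γ := by
      rw [← Real.sin_two_mul]
      have h2t : 2 * (Real.arcsin (α j / γ) / 2) = Real.arcsin (α j / γ) := by ring
      rw [h2t, Real.sin_arcsin (neg_le_of_abs_le habs) (le_of_abs_le habs)]
    have expand : ((Real.cos (Real.arcsin (α j / γ)/2) * Real.sin (Real.arcsin (α j / γ)/2) : ℝ) : ℂ)
          * ((ρ ^ ((j:ℕ)+1)).trace + (ρ ^ ((j:ℕ)+1)).trace)
        = ((2 * Real.sin (Real.arcsin (α j / γ)/2) * Real.cos (Real.arcsin (α j / γ)/2) : ℝ) : ℂ)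
          * (ρ ^ ((j:ℕ)+1)).trace := by
      push_cast
      ring
    rw [expand, hsin]
    push_cast
    ring
  -- expand the circuit
  have hvv : ∀ j : Fin n, Matrix.vecMulVec (fun _ : Fin n => ((1 / Real.sqrt n : ℝ) : ℂ))
      (star fun _ : Fin n => ((1 / Real.sqrt n : ℝ) : ℂ)) j j = ((1 / (n:ℝ) : ℝ) : ℂ) := by
    intro j
    have hs : (1 / Real.sqrt n) * (1 / Real.sqrt n) = 1 / (n:ℝ) := by
      rw [div_mul_div_comm, one_mul, Real.mul_self_sqrt (by positivity)]
    rw [Matrix.vecMulVec_apply, Pi.star_apply, Complex.star_def, Complex.conj_ofReal,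
      ← Complex.ofReal_mul, hs]
  simp only [qsfW, Matrix.conjTranspose_sum, kron_conjT, stdBasis_conjT]
  simp only [Finset.sum_mul, Finset.mul_sum, Matrix.trace_sum]
  simp only [← Matrix.mul_kronecker_mul]
  simp only [Matrix.one_mul]
  simp only [Matrix.trace_kronecker, ctrl_trace]
  simp only [ite_mul, zero_mul, Finset.sum_ite_eq, Finset.sum_ite_eq', Finset.mem_univ, if_true]
  simp only [hvv, key]
  refine Finset.sum_congr rfl fun j _ => ?_
  push_cast
  ring
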